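/- arXiv:0808.2308 — 6 statements merged into one kernel-verified Lean document; each statement's English description precedes it below -/
import Mathlib

section
/- Let (ω_i) be a sequence of positive integers and define q_n by the recursion q_n = ω_n q_{n-1} + q_{n-2} with q_{-1} = 0, q_0 = 1. Then for all n ≥ 1, ω_1 · ∏_{i=2}^n ω_i (1 + 1/(ω_i(ω_{i-1}+1))) ≤ q_n. -/
/-- Denominators of the convergents: `q_n = ω_n q_{n-1} + q_{n-2}`, `q_{-1} = 0`, `q_0 = 1`. -/
def qRec (a : ℕ → ℕ) : ℕ → ℕ
  | 0 => 1
  | 1 => a 1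
  | n + 2 => a (n + 2) * qRec a (n + 1) + qRec a n

lemma qRec_pos (ω : ℕ → ℕ) (hω : ∀ i, 1 ≤ ω i) : ∀ n, 0 < qRec ω n
  | 0 => Nat.one_pos
  | 1 => hω 1
  | n + 2 => by
    have h1 := qRec_pos ω hω (n + 1)
    have := hω (n + 2)
    simp only [qRec]
    positivity

lemma qRec_mono (ω : ℕ → ℕ) (hω : ∀ i, 1 ≤ ω i) : ∀ n, qRec ω n ≤ qRec ω (n + 1)
  | 0 => by simpa [qRec] using hω 1
  | n + 1 => by
    simp only [qRec]
    calc qRec ω (n + 1) = 1 * qRec ω (n + 1) := (one_mul _).symm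
      _ ≤ ω (n + 2) * qRec ω (n + 1) + qRec ω n :=
        Nat.le_add_right_of_le (Nat.mul_le_mul_right _ (hω _))

lemma qRec_succ_le (ω : ℕ → ℕ) (hω : ∀ i, 1 ≤ ω i) :
    ∀ m, qRec ω (m + 1) ≤ (ω (m + 1) + 1) * qRec ω m
  | 0 => by simp [qRec]
  | m + 1 => by
    simp only [qRec]
    have h := qRec_mono ω hω m
    calc ω (m + 2) * qRec ω (m + 1) + qRec ω m
        ≤ ω (m + 2) * qRec ω (m + 1) + qRec ω (m + 1) := by omega
      _ = (ω (m + 2) + 1) * qRec ω (m + 1) := by ring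

/-- For a sequence `(ω_i)` of positive integers and all `n ≥ 1`,
`ω_1 ∏_{i=2}^n ω_i (1 + 1/(ω_i(ω_{i-1}+1))) ≤ q_n`. -/
theorem refined_lower_bound_qn (ω : ℕ → ℕ) (hω : ∀ i, 1 ≤ ω i) (n : ℕ) (hn : 1 ≤ n) :
    (ω 1 : ℝ) * ∏ i ∈ Finset.Icc 2 n,
        ((ω i : ℝ) * (1 + 1 / ((ω i : ℝ) * ((ω (i - 1) : ℝ) + 1))))
      ≤ (qRec ω n : ℝ) := by
  induction n, hn using Nat.le_induction with
  | base => simp [qRec]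
  | succ n hn IH =>
    obtain ⟨m, rfl⟩ := Nat.exists_eq_add_of_le hn
    set n := 1 + m with hnm
    have h2 : 2 ≤ n + 1 := by omega
    rw [Finset.prod_Icc_succ_top h2, ← mul_assoc]
    have hA : (1 : ℝ) ≤ (ω (n + 1) : ℝ) := by exact_mod_cast hω (n + 1)
    have hA0 : (0 : ℝ) < (ω (n + 1) : ℝ) := by linarith
    have hB0 : (0 : ℝ) < (ω n : ℝ) + 1 := by positivity
    have hq0 : (0 : ℝ) < (qRec ω n : ℝ) := by exact_mod_cast qRec_pos ω hω n
    have hf : (0 : ℝ) ≤ (ω (n + 1) : ℝ) * (1 + 1 / ((ω (n + 1) : ℝ) * ((ω (n + 1 - 1) : ℝ) + 1))) := by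
      positivity
    have step1 := mul_le_mul_of_nonneg_right IH hf
    refine step1.trans ?_
    have hsub : n + 1 - 1 = n := by omega
    rw [hsub]
    have hkey : (qRec ω n : ℝ) ≤ ((ω n : ℝ) + 1) * (qRec ω (n - 1) : ℝ) := by
      have : qRec ω n ≤ (ω n + 1) * qRec ω (n - 1) := by
        have := qRec_succ_le ω hω m
        have hm : m + 1 = n := by omega
        rw [hm] at this
        have hm2 : n - 1 = m := by omega
        rw [hm2]
        exact this
      exact_mod_cast this
    have hrec : (qRec ω (n + 1) : ℝ) = (ω (n + 1) : ℝ) * qRec ω n + qRec ω (n - 1) := by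
      have hm : n + 1 = m + 2 := by omega
      have hm2 : n - 1 = m := by omega
      rw [hm, hm2]
      have : qRec ω (m + 2) = ω (m + 2) * qRec ω (m + 1) + qRec ω m := rfl
      rw [this]
      push_cast
      have : n = m + 1 := by omega
      rw [this]
    rw [hrec]
    have expand : (qRec ω n : ℝ) * ((ω (n + 1) : ℝ) * (1 + 1 / ((ω (n + 1) : ℝ) * ((ω n : ℝ) + 1))))
        = (ω (n + 1) : ℝ) * qRec ω n + (qRec ω n : ℝ) / ((ω n : ℝ) + 1) := by
      field_simp
    rw [expand]
    have : (qRec ω n : ℝ) / ((ω n : ℝ) + 1) ≤ (qRec ω (n - 1) : ℝ) := by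
      rw [div_le_iff₀ hB0]
      linarith [hkey]
    linarith
end

section
/- If x is an irrational in (0,1) whose continued fraction digits a_i(x) tend to infinity, then lim_{n→∞} (log ∏_{i=1}^n a_i(x)) / (log q_n(x)) = 1. -/
open Filter

/-- The Gauss map `x ↦ 1/x - ⌊1/x⌋`. -/
noncomputable def gaussMap (x : ℝ) : ℝ := 1 / x - ⌊1 / x⌋

/-- The `i`-th continued fraction digit of `x` (for `i ≥ 1`). -/
noncomputable def cfDigit (x : ℝ) (i : ℕ) : ℕ := ⌊1 / (gaussMap^[i - 1] x)⌋₊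

/-- The denominator `q_n(x)` of the `n`-th convergent of `x`. -/
noncomputable def cfDenom (x : ℝ) : ℕ → ℕ := qRec (cfDigit x)

lemma gaussMap_step {y : ℝ} (hy : y ∈ Set.Ioo (0:ℝ) 1) (hirr : Irrational y) :
    gaussMap y ∈ Set.Ioo (0:ℝ) 1 ∧ Irrational (gaussMap y) := by
  have h1 : Irrational (1 / y) := by
    rw [one_div]; exact hirr.inv
  have hg : gaussMap y = Int.fract (1 / y) := rfl
  have hirr' : Irrational (gaussMap y) := by
    rw [hg]; unfold Int.fract; exact h1.sub_intCast _
  refine ⟨⟨?_, ?_⟩, hirr'⟩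
  · rcases lt_or_eq_of_le (Int.fract_nonneg (1 / y)) with h | h
    · rwa [hg]
    · exfalso
      have := Int.fract_eq_iff.mp h.symm
      obtain ⟨-, -, z, hz⟩ := this
      exact h1 ⟨z, by push_cast at hz ⊢; linarith⟩
  · rw [hg]; exact Int.fract_lt_one _
  
lemma iter_mem (x : ℝ) (hx : x ∈ Set.Ioo (0:ℝ) 1) (hirr : Irrational x) (k : ℕ) :
    gaussMap^[k] x ∈ Set.Ioo (0:ℝ) 1 ∧ Irrational (gaussMap^[k] x) := by
  induction k with
  | zero => exact ⟨hx, hirr⟩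
  | succ n ih =>
    rw [Function.iterate_succ_apply']
    exact gaussMap_step ih.1 ih.2

lemma cfDigit_pos (x : ℝ) (hx : x ∈ Set.Ioo (0:ℝ) 1) (hirr : Irrational x) (i : ℕ) :
    1 ≤ cfDigit x i := by
  obtain ⟨⟨h0, h1⟩, -⟩ := iter_mem x hx hirr (i - 1)
  unfold cfDigit
  exact Nat.le_floor (by rw [Nat.cast_one, le_div_iff₀ h0]; linarith)

lemma qRec_bounds (a : ℕ → ℕ) (ha : ∀ i, 1 ≤ a i) :
    ∀ n, (∏ i ∈ Finset.Icc 1 n, a i) ≤ qRec a n ∧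
      qRec a n ≤ 2 ^ n * ∏ i ∈ Finset.Icc 1 n, a i := by
  have hP : ∀ n, (∏ i ∈ Finset.Icc 1 n, a i) ≤ ∏ i ∈ Finset.Icc 1 (n+1), a i := by
    intro n
    rw [Finset.prod_Icc_succ_top (Nat.le_add_left 1 n)]
    exact Nat.le_mul_of_pos_right _ (ha _)
  have key : ∀ n, ((∏ i ∈ Finset.Icc 1 n, a i) ≤ qRec a n ∧
      qRec a n ≤ 2 ^ n * ∏ i ∈ Finset.Icc 1 n, a i) ∧
      ((∏ i ∈ Finset.Icc 1 (n+1), a i) ≤ qRec a (n+1) ∧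
      qRec a (n+1) ≤ 2 ^ (n+1) * ∏ i ∈ Finset.Icc 1 (n+1), a i) := by
    intro n
    induction n with
    | zero =>
      have e0 : (∏ i ∈ Finset.Icc 1 0, a i) = 1 := by simp
      have e1 : (∏ i ∈ Finset.Icc 1 1, a i) = a 1 := by
        rw [Finset.Icc_self, Finset.prod_singleton]
      refine ⟨⟨?_, ?_⟩, ?_, ?_⟩ <;> simp [qRec, e0, e1] <;> omega
    | succ m ih =>
      refine ⟨ih.2, ?_, ?_⟩
      · show (∏ i ∈ Finset.Icc 1 (m+2), a i) ≤ a (m+2) * qRec a (m+1) + qRec a m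
        rw [Finset.prod_Icc_succ_top (by omega)]
        calc (∏ i ∈ Finset.Icc 1 (m+1), a i) * a (m+2)
            ≤ qRec a (m+1) * a (m+2) := Nat.mul_le_mul_right _ ih.2.1
          _ = a (m+2) * qRec a (m+1) := Nat.mul_comm _ _
          _ ≤ _ := Nat.le_add_right _ _
      · show a (m+2) * qRec a (m+1) + qRec a m ≤ 2 ^ (m+2) * ∏ i ∈ Finset.Icc 1 (m+2), a i
        have e : (∏ i ∈ Finset.Icc 1 (m+2), a i) = (∏ i ∈ Finset.Icc 1 (m+1), a i) * a (m+2) :=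
          Finset.prod_Icc_succ_top (by omega) _
        have h1 : a (m+2) * qRec a (m+1) ≤ a (m+2) * (2^(m+1) * ∏ i ∈ Finset.Icc 1 (m+1), a i) :=
          Nat.mul_le_mul_left _ ih.2.2
        have h2 : qRec a m ≤ 2 ^ m * ∏ i ∈ Finset.Icc 1 m, a i := ih.1.2
        have h3 : (∏ i ∈ Finset.Icc 1 m, a i) ≤ ∏ i ∈ Finset.Icc 1 (m+1), a i := hP m
        have h4 : 1 ≤ a (m+2) := ha _
        calc a (m+2) * qRec a (m+1) + qRec a m
            ≤ a (m+2) * (2^(m+1) * ∏ i ∈ Finset.Icc 1 (m+1), a i)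
              + 2 ^ m * ∏ i ∈ Finset.Icc 1 (m+1), a i := by
              exact Nat.add_le_add h1 (h2.trans (Nat.mul_le_mul_left _ h3))
          _ ≤ a (m+2) * (2^(m+1) * ∏ i ∈ Finset.Icc 1 (m+1), a i)
              + a (m+2) * (2 ^ (m+1) * ∏ i ∈ Finset.Icc 1 (m+1), a i) := by
              refine Nat.add_le_add_left ?_ _
              calc 2 ^ m * ∏ i ∈ Finset.Icc 1 (m+1), a i
                  ≤ 2 ^ (m+1) * ∏ i ∈ Finset.Icc 1 (m+1), a i :=
                    Nat.mul_le_mul_right _ (Nat.pow_le_pow_right (by norm_num) (by omega))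
                _ ≤ a (m+2) * (2 ^ (m+1) * ∏ i ∈ Finset.Icc 1 (m+1), a i) :=
                    Nat.le_mul_of_pos_left _ h4
          _ = 2 ^ (m+2) * ∏ i ∈ Finset.Icc 1 (m+2), a i := by rw [e]; ring
  exact fun n => (key n).1

/-- Cesàro-type divergence. -/
lemma cesaro_atTop (f : ℕ → ℝ) (hnn : ∀ i, 0 ≤ f i)
    (hdiv : Tendsto f atTop atTop) :
    Tendsto (fun n => (∑ i ∈ Finset.Icc 1 n, f i) / n) atTop atTop := by
  rw [tendsto_atTop]
  intro M
  set M' : ℝ := max M 0 + 1 with hM'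
  have hM'pos : 0 < M' := by positivity
  obtain ⟨N, hN⟩ := eventually_atTop.mp (hdiv.eventually_ge_atTop (2 * M'))
  have hN1 : ∀ i, max N 1 ≤ i → 2 * M' ≤ f i := fun i hi => hN i (le_trans (le_max_left _ _) hi)
  set N' := max N 1 with hN'def
  have hN'1 : 1 ≤ N' := le_max_right _ _
  filter_upwards [eventually_ge_atTop (2 * N')] with n hn
  have hn1 : 1 ≤ n := le_trans (by omega) hn
  have hnpos : (0:ℝ) < n := by exact_mod_cast hn1
  have hsub : Finset.Icc N' n ⊆ Finset.Icc 1 n := Finset.Icc_subset_Icc hN'1 le_rfl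
  have h1 : (∑ i ∈ Finset.Icc N' n, f i) ≤ ∑ i ∈ Finset.Icc 1 n, f i :=
    Finset.sum_le_sum_of_subset_of_nonneg hsub (fun i _ _ => hnn i)
  have h2 : (Finset.Icc N' n).card • (2 * M') ≤ ∑ i ∈ Finset.Icc N' n, f i :=
    Finset.card_nsmul_le_sum _ _ _ (fun i hi => hN1 i (Finset.mem_Icc.mp hi).1)
  have hcard : (Finset.Icc N' n).card = n + 1 - N' := Nat.card_Icc _ _
  have hge : (n : ℝ) / 2 ≤ ((n + 1 - N' : ℕ) : ℝ) := by
    have : N' ≤ n := by omega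
    have hcast : ((n + 1 - N' : ℕ) : ℝ) = (n : ℝ) + 1 - N' := by
      push_cast [Nat.cast_sub (by omega : N' ≤ n + 1)]; ring
    rw [hcast]
    have : (N' : ℝ) ≤ n / 2 := by
      have : (2 * N' : ℕ) ≤ n := hn
      have := (Nat.cast_le (α := ℝ)).mpr this
      push_cast at this
      linarith
    linarith
  have hsum : (n : ℝ) * M' ≤ ∑ i ∈ Finset.Icc 1 n, f i := by
    rw [hcard] at h2
    rw [nsmul_eq_mul] at h2
    nlinarith [hnn 0]
  rw [le_div_iff₀ hnpos]
  calc M * n ≤ M' * n := by nlinarith [le_max_left M 0]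
    _ = n * M' := by ring
    _ ≤ _ := hsum

/-- If the continued fraction digits of an irrational `x ∈ (0,1)` tend to infinity,
then the arithmetic-geometric scaling equals `1`. -/
theorem digits_to_infinity_scaling_one (x : ℝ) (hx : x ∈ Set.Ioo (0 : ℝ) 1)
    (hirr : Irrational x) (hdiv : Tendsto (fun i : ℕ => cfDigit x i) atTop atTop) :
    Tendsto (fun n : ℕ =>
        Real.log (∏ i ∈ Finset.Icc 1 n, (cfDigit x i : ℝ)) / Real.log (cfDenom x n))
      atTop (nhds 1) := by
  set a := cfDigit x with ha
  have ha1 : ∀ i, 1 ≤ a i := cfDigit_pos x hx hirr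
  set P : ℕ → ℕ := fun n => ∏ i ∈ Finset.Icc 1 n, a i with hPdef
  have hPpos : ∀ n, 1 ≤ P n := fun n => Finset.one_le_prod' (fun i _ => ha1 i)
  have hq := qRec_bounds a ha1
  set L : ℕ → ℝ := fun n => Real.log (P n) with hLdef
  have hLsum : ∀ n, L n = ∑ i ∈ Finset.Icc 1 n, Real.log (a i) := by
    intro n
    simp only [hLdef, hPdef, Nat.cast_prod]
    exact Real.log_prod (fun i _ => ne_of_gt (lt_of_lt_of_le one_pos (by exact_mod_cast ha1 i)))
  -- the function in the statement equals L n / log q n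
  have hfun : (fun n : ℕ =>
      Real.log (∏ i ∈ Finset.Icc 1 n, (cfDigit x i : ℝ)) / Real.log (cfDenom x n))
      = fun n => L n / Real.log (cfDenom x n) := by
    funext n
    congr 1
    simp only [hLdef, hPdef, ha, Nat.cast_prod]
  rw [hfun]
  -- Cesàro: L n / n → ∞
  have hlogdiv : Tendsto (fun i => Real.log (a i)) atTop atTop :=
    Real.tendsto_log_atTop.comp (tendsto_natCast_atTop_atTop.comp hdiv)
  have hLnn : ∀ i, 0 ≤ Real.log (a i) := fun i =>
    Real.log_nonneg (by exact_mod_cast ha1 i)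
  have hces : Tendsto (fun n => L n / n) atTop atTop := by
    have := cesaro_atTop (fun i => Real.log (a i)) hLnn hlogdiv
    refine this.congr (fun n => ?_)
    rw [hLsum n]
  -- hence n / L n → 0
  have hinv : Tendsto (fun n : ℕ => (n : ℝ) / L n) atTop (nhds 0) := by
    have := hces.inv_tendsto_atTop
    refine this.congr' ?_
    filter_upwards [eventually_ge_atTop 1] with n hn
    simp only [Pi.inv_apply, inv_div]
  -- t n = n * log 2 / L n → 0
  have ht : Tendsto (fun n : ℕ => (n : ℝ) * Real.log 2 / L n) atTop (nhds 0) := by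
    have := hinv.const_mul (Real.log 2)
    rw [mul_zero] at this
    refine this.congr (fun n => ?_)
    ring
  -- eventually L n ≥ 1 (hence > 0) and n ≥ 1
  have hLev : ∀ᶠ n in atTop, 1 ≤ L n := by
    have h1 := (tendsto_atTop.mp hces) 1
    filter_upwards [h1, eventually_ge_atTop 1] with n hn hn1
    have hnpos : (0:ℝ) < n := by exact_mod_cast hn1
    rw [le_div_iff₀ hnpos] at hn
    have h1n : (1:ℝ) ≤ n := by exact_mod_cast hn1
    nlinarith
  -- key inequalities between L n and log q n
  have hqlog : ∀ n, L n ≤ Real.log (cfDenom x n) ∧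
      Real.log (cfDenom x n) ≤ L n + n * Real.log 2 := by
    intro n
    have h1 : (P n : ℝ) ≤ (cfDenom x n : ℝ) := by exact_mod_cast (hq n).1
    have h2 : (cfDenom x n : ℝ) ≤ 2 ^ n * (P n : ℝ) := by exact_mod_cast (hq n).2
    have hPposR : (0:ℝ) < P n := by exact_mod_cast hPpos n
    constructor
    · exact Real.log_le_log hPposR h1
    · calc Real.log (cfDenom x n) ≤ Real.log (2 ^ n * P n) :=
          Real.log_le_log (lt_of_lt_of_le hPposR h1) h2
        _ = n * Real.log 2 + L n := by
          rw [Real.log_mul (by positivity) (ne_of_gt hPposR), Real.log_pow]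
        _ = L n + n * Real.log 2 := by ring
  -- lower bound function g n = (1 + t n)⁻¹ → 1
  have hg : Tendsto (fun n : ℕ => (1 + (n : ℝ) * Real.log 2 / L n)⁻¹) atTop (nhds 1) := by
    have h1 : Tendsto (fun n : ℕ => 1 + (n : ℝ) * Real.log 2 / L n) atTop (nhds 1) := by
      have := (tendsto_const_nhds (x := (1:ℝ)) (f := atTop (α := ℕ))).add ht
      simpa using this
    have := h1.inv₀ (by norm_num)
    simpa using this
  refine tendsto_of_tendsto_of_tendsto_of_le_of_le' hg tendsto_const_nhds ?_ ?_
  · -- lower bound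
    filter_upwards [hLev] with n hLn
    have hLpos : (0:ℝ) < L n := lt_of_lt_of_le one_pos hLn
    have hnlog : (0:ℝ) ≤ (n:ℝ) * Real.log 2 := by positivity
    obtain ⟨hlo, hhi⟩ := hqlog n
    have hqpos : 0 < Real.log (cfDenom x n) := lt_of_lt_of_le hLpos hlo
    have key : L n / (L n + (n:ℝ) * Real.log 2) ≤ L n / Real.log (cfDenom x n) :=
      div_le_div_of_nonneg_left hLpos.le hqpos hhi
    have e : (1 + (n : ℝ) * Real.log 2 / L n)⁻¹ = L n / (L n + (n:ℝ) * Real.log 2) := by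
      rw [eq_div_iff (by positivity)]
      field_simp
    rw [e]
    exact key
  · -- upper bound
    filter_upwards [hLev] with n hLn
    have hLpos : (0:ℝ) < L n := lt_of_lt_of_le one_pos hLn
    obtain ⟨hlo, -⟩ := hqlog n
    have hqpos : 0 < Real.log (cfDenom x n) := lt_of_lt_of_le hLpos hlo
    rw [div_le_one hqpos]
    exact hlo
end

section
/- Let q > 2 and let x be an irrational in (0,1) with all continued fraction digits a_i(x) ≥ q. Then for all n ≥ 1, (log ∏_{i=1}^n a_i(x)) / (log q_n(x)) ≥ 1 − 1/(q² log q). -/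
open Filter

lemma qRec_lower (a : ℕ → ℕ) : ∀ n, ∏ i ∈ Finset.Icc 1 n, a i ≤ qRec a n
  | 0 => by simp [qRec]
  | 1 => by simp [qRec]
  | n + 2 => by
    rw [qRec, show n + 2 = (n + 1) + 1 from rfl, Finset.prod_Icc_succ_top (by omega)]
    calc (∏ i ∈ Finset.Icc 1 (n+1), a i) * a (n+1+1)
        ≤ qRec a (n+1) * a (n+1+1) :=
          Nat.mul_le_mul_right _ (qRec_lower a (n+1))
      _ ≤ a (n+2) * qRec a (n+1) + qRec a n := by
          rw [mul_comm]; exact Nat.le_add_right _ _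

lemma qRec_upper (a : ℕ → ℕ) (q : ℕ) (hq : 0 < q) (ha : ∀ i, 1 ≤ i → q ≤ a i) :
    ∀ n, (qRec a n : ℝ) ≤ ∏ i ∈ Finset.Icc 1 n, ((a i : ℝ) + 1 / q)
  | 0 => by simp [qRec]
  | 1 => by
    simp only [qRec, Finset.Icc_self, Finset.prod_singleton]
    have : (0:ℝ) < q := by positivity
    have : (0:ℝ) < 1 / q := by positivity
    linarith
  | n + 2 => by
    have hq' : (0:ℝ) < q := by positivity
    have hP : ∀ m, (0:ℝ) ≤ ∏ i ∈ Finset.Icc 1 m, ((a i : ℝ) + 1 / q) := by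
      intro m
      apply Finset.prod_nonneg
      intro i _
      positivity
    have h1 := qRec_upper a q hq ha (n + 1)
    have h0 := qRec_upper a q hq ha n
    rw [qRec, show n + 2 = (n + 1) + 1 from rfl, Finset.prod_Icc_succ_top (by omega)]
    push_cast
    have key : (qRec a n : ℝ) ≤ (1 / q) * ∏ i ∈ Finset.Icc 1 (n+1), ((a i : ℝ) + 1 / q) := by
      rw [Finset.prod_Icc_succ_top (by omega : 1 ≤ n + 1)]
      have hai : (q:ℝ) ≤ (a (n+1) : ℝ) + 1 / q := by
        have := ha (n+1) (by omega)
        have : (q:ℝ) ≤ a (n+1) := by exact_mod_cast this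
        have : (0:ℝ) < 1/q := by positivity
        linarith
      calc (qRec a n : ℝ) ≤ ∏ i ∈ Finset.Icc 1 n, ((a i : ℝ) + 1 / q) := h0
        _ = (1/q) * (q * ∏ i ∈ Finset.Icc 1 n, ((a i : ℝ) + 1 / q)) := by
            rw [← mul_assoc, one_div_mul_cancel (ne_of_gt hq'), one_mul]
        _ ≤ (1/q) * ((∏ i ∈ Finset.Icc 1 n, ((a i : ℝ) + 1 / q)) * ((a (n+1) : ℝ) + 1/q)) := by
            apply mul_le_mul_of_nonneg_left _ (by positivity)
            rw [mul_comm ((q:ℝ))]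
            exact mul_le_mul_of_nonneg_left hai (hP n)
    have hnonneg : (0:ℝ) ≤ (a (n+2) : ℝ) := by positivity
    calc (a (n+2) : ℝ) * qRec a (n+1) + qRec a n
        ≤ (a (n+2) : ℝ) * (∏ i ∈ Finset.Icc 1 (n+1), ((a i : ℝ) + 1 / q))
            + (1/q) * ∏ i ∈ Finset.Icc 1 (n+1), ((a i : ℝ) + 1 / q) := by
          have := mul_le_mul_of_nonneg_left h1 hnonneg
          linarith
      _ = (∏ i ∈ Finset.Icc 1 (n+1), ((a i : ℝ) + 1 / q)) * ((a (n+1+1) : ℝ) + 1/q) := by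
          rw [show n+1+1 = n+2 from rfl]; ring
      _ = _ := by norm_num

/-- If all continued fraction digits of `x` are at least `q > 2`, then for all `n ≥ 1`
the arithmetic-geometric quotient is at least `1 − 1/(q² log q)`. -/
theorem large_digits_scaling_lower_bound (q : ℕ) (hq : 2 < q) (x : ℝ)
    (hx : x ∈ Set.Ioo (0 : ℝ) 1) (hirr : Irrational x)
    (hdig : ∀ i, 1 ≤ i → q ≤ cfDigit x i) (n : ℕ) (hn : 1 ≤ n) :
    1 - 1 / ((q : ℝ) ^ 2 * Real.log q) ≤
      Real.log (∏ i ∈ Finset.Icc 1 n, (cfDigit x i : ℝ)) / Real.log (cfDenom x n) := by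
  set a := cfDigit x with ha
  have hq0 : 0 < q := by omega
  have hqR : (1:ℝ) < q := by exact_mod_cast by omega
  have hlogq : 0 < Real.log q := Real.log_pos hqR
  -- digit lower bounds
  have hai : ∀ i ∈ Finset.Icc 1 n, (q:ℝ) ≤ (a i : ℝ) := by
    intro i hi
    rw [Finset.mem_Icc] at hi
    exact_mod_cast hdig i hi.1
  have haipos : ∀ i ∈ Finset.Icc 1 n, (0:ℝ) < (a i : ℝ) := fun i hi =>
    lt_of_lt_of_le (by positivity) (hai i hi)
  set P : ℝ := ∏ i ∈ Finset.Icc 1 n, (a i : ℝ) with hP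
  have hPq : (q:ℝ)^n ≤ P := by
    rw [hP]
    calc (q:ℝ)^n = ∏ i ∈ Finset.Icc 1 n, (q:ℝ) := by
          rw [Finset.prod_const, Nat.card_Icc]; norm_num
      _ ≤ P := Finset.prod_le_prod (fun i _ => by positivity) hai
  have hP1 : (1:ℝ) < P := lt_of_lt_of_le (one_lt_pow₀ hqR (by omega)) hPq
  -- log P ≥ n log q
  have hL : (n:ℝ) * Real.log q ≤ Real.log P := by
    calc (n:ℝ) * Real.log q = Real.log ((q:ℝ)^n) := by rw [Real.log_pow]
      _ ≤ Real.log P := Real.log_le_log (by positivity) hPq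
  -- q_n ≥ P, so log q_n ≥ log P > 0
  have hqn_lower : P ≤ (qRec a n : ℝ) := by
    have := qRec_lower a n
    calc P = ((∏ i ∈ Finset.Icc 1 n, a i : ℕ) : ℝ) := by push_cast [hP]; rfl
      _ ≤ _ := by exact_mod_cast this
  set D : ℝ := Real.log (qRec a n) with hD
  have hDL : Real.log P ≤ D := Real.log_le_log (by positivity) hqn_lower
  have hD0 : 0 < D := lt_of_lt_of_le (lt_of_lt_of_le (by positivity : (0:ℝ) < (n:ℝ) * Real.log q) hL) hDL
  -- upper bound for D
  have hupper : D ≤ Real.log P + n / q ^ 2 := by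
    have h1 : (qRec a n : ℝ) ≤ ∏ i ∈ Finset.Icc 1 n, ((a i : ℝ) + 1 / q) :=
      qRec_upper a q hq0 hdig n
    have h2 : D ≤ Real.log (∏ i ∈ Finset.Icc 1 n, ((a i : ℝ) + 1 / q)) := by
      apply Real.log_le_log _ h1
      exact_mod_cast lt_of_lt_of_le (lt_trans one_pos hP1) hqn_lower
    have h3 : Real.log (∏ i ∈ Finset.Icc 1 n, ((a i : ℝ) + 1 / q))
        = ∑ i ∈ Finset.Icc 1 n, Real.log ((a i : ℝ) + 1 / q) := by
      apply Real.log_prod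
      intro i hi
      have := haipos i hi
      positivity
    have h4 : ∀ i ∈ Finset.Icc 1 n,
        Real.log ((a i : ℝ) + 1 / q) ≤ Real.log (a i) + 1 / q ^ 2 := by
      intro i hi
      have hpos := haipos i hi
      have hqa := hai i hi
      have heq : (a i : ℝ) + 1 / q = (a i) * (1 + 1 / (q * a i)) := by
        field_simp
      rw [heq, Real.log_mul (ne_of_gt hpos) (by positivity)]
      gcongr
      have hbound : 1 / ((q:ℝ) * a i) ≤ 1 / q ^ 2 := by
        apply div_le_div_of_nonneg_left one_pos.le (by positivity)
        calc (q:ℝ)^2 = q * q := sq (q:ℝ)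
          _ ≤ q * a i := by
            apply mul_le_mul_of_nonneg_left hqa (by positivity)
      calc Real.log (1 + 1 / ((q:ℝ) * a i)) ≤ 1 / ((q:ℝ) * a i) := by
            have := Real.log_le_sub_one_of_pos
              (show (0:ℝ) < 1 + 1 / ((q:ℝ) * a i) by positivity)
            linarith
        _ ≤ 1 / q ^ 2 := hbound
    have h5 : ∑ i ∈ Finset.Icc 1 n, Real.log ((a i : ℝ) + 1 / q)
        ≤ ∑ i ∈ Finset.Icc 1 n, (Real.log (a i) + 1 / q ^ 2) :=
      Finset.sum_le_sum h4
    have h6 : ∑ i ∈ Finset.Icc 1 n, (Real.log ((a i:ℕ) : ℝ) + 1 / q ^ 2)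
        = Real.log P + n / q ^ 2 := by
      rw [Finset.sum_add_distrib, Finset.sum_const, Nat.card_Icc]
      rw [hP, Real.log_prod (fun i hi => ne_of_gt (haipos i hi))]
      simp
      ring
    linarith
  -- conclude
  show 1 - 1 / ((q : ℝ) ^ 2 * Real.log q) ≤ Real.log P / D
  have step1 : 1 - (n / q^2) / D ≤ Real.log P / D := by
    have : (D - n / q^2) / D ≤ Real.log P / D := by
      gcongr
      linarith
    calc 1 - (n / q^2) / D = (D - n / q^2) / D := by field_simp
      _ ≤ _ := this
  have step2 : (n / q^2) / D ≤ 1 / (q^2 * Real.log q) := by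
    have hnq : (0:ℝ) < n / q^2 := by
      have : (0:ℝ) < n := by exact_mod_cast hn
      positivity
    calc (n / q^2) / D ≤ (n / q^2) / ((n:ℝ) * Real.log q) := by
          apply div_le_div_of_nonneg_left hnq.le _ _
          · positivity
          · exact le_trans hL hDL
      _ = 1 / (q^2 * Real.log q) := by
          have : (0:ℝ) < n := by exact_mod_cast hn
          field_simp
  linarith
end

section
/- For the Gauss measure λ_g with density 1/(log 2 · (1+x)) on (0,1), the integral ∫ 2 log a_1(x) dλ_g(x) equals (2/log 2) ∑_{k=1}^∞ log(k) · log(1 + 1/(k(k+2))) = 2 log K_0, where K_0 is the Khintchine constant. -/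
open MeasureTheory

/-- The Gauss measure on `(0,1)`, with density `1/(log 2 · (1+x))` w.r.t. Lebesgue measure. -/
noncomputable def gaussMeasure : Measure ℝ :=
  (volume.restrict (Set.Ioo (0 : ℝ) 1)).withDensity
    fun x => ENNReal.ofReal (1 / (Real.log 2 * (1 + x)))

/-- The Khintchine constant `K₀ = ∏_{k≥1} (1 + 1/(k(k+2)))^(log k / log 2)`. -/
noncomputable def khintchine : ℝ :=
  ∏' k : ℕ+, (1 + 1 / (((k : ℕ) : ℝ) * (((k : ℕ) : ℝ) + 2))) ^ (Real.log (k : ℕ) / Real.log 2)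


lemma term_nonneg (k : ℕ+) :
    0 ≤ Real.log ((k:ℕ):ℝ) * Real.log (1 + 1 / (((k : ℕ) : ℝ) * (((k : ℕ) : ℝ) + 2))) := by
  have hk : (1:ℝ) ≤ ((k:ℕ):ℝ) := by exact_mod_cast k.one_le
  have h2 : (0:ℝ) < ((k:ℕ):ℝ) * (((k:ℕ):ℝ) + 2) := by positivity
  have : (0:ℝ) ≤ 1 / (((k:ℕ):ℝ) * (((k:ℕ):ℝ) + 2)) := by positivity
  exact mul_nonneg (Real.log_nonneg hk) (Real.log_nonneg (by linarith))

lemma summable_term : Summable (fun k : ℕ+ =>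
    Real.log ((k:ℕ):ℝ) * Real.log (1 + 1 / (((k : ℕ) : ℝ) * (((k : ℕ) : ℝ) + 2)))) := by
  have hbig : Summable (fun n : ℕ => 2 * (((n:ℝ) ^ ((3:ℝ)/2))⁻¹)) :=
    (Real.summable_nat_rpow_inv.mpr (by norm_num)).mul_left 2
  have hsub : Summable (fun k : ℕ+ => 2 * ((((k:ℕ):ℝ) ^ ((3:ℝ)/2))⁻¹)) :=
    hbig.comp_injective PNat.coe_injective
  refine Summable.of_nonneg_of_le (fun k => term_nonneg k) (fun k => ?_) hsub
  set n : ℝ := ((k:ℕ):ℝ) with hn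
  have hn1 : (1:ℝ) ≤ n := by rw [hn]; exact_mod_cast k.one_le
  have hn0 : (0:ℝ) < n := by linarith
  have hlog : Real.log n ≤ 2 * Real.sqrt n := by
    have h := Real.log_le_sub_one_of_pos (Real.sqrt_pos.mpr hn0)
    have h2 : Real.log (Real.sqrt n) = Real.log n / 2 := Real.log_sqrt hn0.le
    nlinarith [Real.sqrt_nonneg n]
  have hε : Real.log (1 + 1 / (n * (n + 2))) ≤ (n^2)⁻¹ := by
    have hpos : (0:ℝ) < n * (n+2) := by positivity
    have := Real.log_le_sub_one_of_pos (show (0:ℝ) < 1 + 1/(n*(n+2)) by positivity)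
    have hle : 1 / (n*(n+2)) ≤ (n^2)⁻¹ := by
      rw [one_div, inv_le_inv₀ hpos (by positivity)]
      nlinarith
    linarith
  calc Real.log n * Real.log (1 + 1 / (n * (n + 2)))
      ≤ (2 * Real.sqrt n) * (n^2)⁻¹ := by
        apply mul_le_mul hlog hε (Real.log_nonneg (by
          have : (0:ℝ) < 1/(n*(n+2)) := by positivity
          linarith)) (by positivity)
    _ = 2 * ((n ^ ((3:ℝ)/2))⁻¹) := by
        rw [Real.sqrt_eq_rpow]
        rw [show (n:ℝ)^2 = n ^ ((2:ℝ)) by rw [← Real.rpow_natCast n 2]; norm_num]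
        rw [← Real.rpow_neg hn0.le, mul_assoc, ← Real.rpow_add hn0, ← Real.rpow_neg hn0.le]
        norm_num

lemma log_khintchine :
    Real.log khintchine =
      (1 / Real.log 2) *
        ∑' k : ℕ+, Real.log ((k:ℕ):ℝ) * Real.log (1 + 1 / (((k : ℕ) : ℝ) * (((k : ℕ) : ℝ) + 2))) := by
  have hfac : ∀ k : ℕ+,
      (1 + 1 / (((k : ℕ) : ℝ) * (((k : ℕ) : ℝ) + 2))) ^ (Real.log (k : ℕ) / Real.log 2)
        = Real.exp ((1 / Real.log 2) *
            (Real.log ((k:ℕ):ℝ) * Real.log (1 + 1 / (((k : ℕ) : ℝ) * (((k : ℕ) : ℝ) + 2))))) := by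
    intro k
    have hk : (0:ℝ) < ((k:ℕ):ℝ) := by exact_mod_cast k.pos
    have hpos : (0:ℝ) < 1 + 1 / (((k:ℕ):ℝ) * (((k:ℕ):ℝ) + 2)) := by positivity
    rw [Real.rpow_def_of_pos hpos]
    ring_nf
  have hg : Summable (fun k : ℕ+ => (1 / Real.log 2) *
      (Real.log ((k:ℕ):ℝ) * Real.log (1 + 1 / (((k : ℕ) : ℝ) * (((k : ℕ) : ℝ) + 2))))) :=
    summable_term.mul_left _
  have h1 : khintchine = Real.exp (∑' k : ℕ+, (1 / Real.log 2) *
      (Real.log ((k:ℕ):ℝ) * Real.log (1 + 1 / (((k : ℕ) : ℝ) * (((k : ℕ) : ℝ) + 2))))) := by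
    rw [khintchine]
    rw [tprod_congr hfac]
    exact hg.hasSum.rexp.tprod_eq
  rw [h1, Real.log_exp, tsum_mul_left]


lemma floor_eq_on (k : ℕ+) {x : ℝ} (hx : x ∈ Set.Ioc ((((k:ℕ):ℝ)+1)⁻¹) (((k:ℕ):ℝ)⁻¹)) :
    ⌊1 / x⌋₊ = (k:ℕ) := by
  have hk : (0:ℝ) < ((k:ℕ):ℝ) := by exact_mod_cast k.pos
  have hx0 : 0 < x := lt_trans (by positivity) hx.1
  rw [Nat.floor_eq_iff (by positivity)]
  constructor
  · rw [one_div, le_inv_comm₀ hk hx0]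
    exact hx.2
  · rw [one_div]
    have := hx.1
    calc x⁻¹ < ((((k:ℕ):ℝ)+1)⁻¹)⁻¹ := by
          exact inv_strictAnti₀ (by positivity) hx.1
      _ = ((k:ℕ):ℝ)+1 := inv_inv _

lemma union_eq : Set.Ioc (0:ℝ) 1 = ⋃ k : ℕ+, Set.Ioc ((((k:ℕ):ℝ)+1)⁻¹) (((k:ℕ):ℝ)⁻¹) := by
  ext x
  simp only [Set.mem_iUnion, Set.mem_Ioc]
  constructor
  · rintro ⟨hx0, hx1⟩
    have h1x : (1:ℝ) ≤ 1/x := by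
      rw [le_div_iff₀ hx0]; linarith
    set n := ⌊1/x⌋₊ with hn
    have hn1 : 1 ≤ n := Nat.le_floor (by exact_mod_cast h1x)
    refine ⟨⟨n, hn1⟩, ?_, ?_⟩
    · have h := Nat.lt_floor_add_one (1/x)
      simp only [PNat.mk_coe]
      rw [inv_lt_comm₀ (by positivity) hx0]
      calc x⁻¹ = 1/x := (one_div x).symm
        _ < (n:ℝ) + 1 := h
    · have h := Nat.floor_le (le_of_lt (by positivity : (0:ℝ) < 1/x))
      simp only [PNat.mk_coe]
      have hn0 : (0:ℝ) < (n:ℝ) := by exact_mod_cast hn1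
      exact (le_inv_comm₀ hx0 hn0).mpr (le_trans h (le_of_eq (one_div x)))
  · rintro ⟨k, hk1, hk2⟩
    have hk : (1:ℝ) ≤ ((k:ℕ):ℝ) := by exact_mod_cast k.one_le
    constructor
    · exact lt_trans (by positivity) hk1
    · calc x ≤ ((k:ℕ):ℝ)⁻¹ := hk2
        _ ≤ 1 := by rw [inv_le_one_iff₀]; right; exact hk

lemma pairwise_disjoint :
    Pairwise (Function.onFun Disjoint
      (fun k : ℕ+ => Set.Ioc ((((k:ℕ):ℝ)+1)⁻¹) (((k:ℕ):ℝ)⁻¹))) := by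
  intro j k hjk
  have key : ∀ a b : ℕ+, a < b →
      Disjoint (Set.Ioc ((((a:ℕ):ℝ)+1)⁻¹) (((a:ℕ):ℝ)⁻¹))
        (Set.Ioc ((((b:ℕ):ℝ)+1)⁻¹) (((b:ℕ):ℝ)⁻¹)) := by
    intro a b hab
    rw [Set.Ioc_disjoint_Ioc]
    have ha : (0:ℝ) < ((a:ℕ):ℝ) := by exact_mod_cast a.pos
    have h : ((a:ℕ):ℝ) + 1 ≤ ((b:ℕ):ℝ) := by exact_mod_cast hab
    refine le_trans (min_le_right _ _) (le_trans ?_ (le_max_left _ _))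
    exact inv_le_inv₀ (by positivity) (by positivity) |>.mpr h
  rcases lt_or_gt_of_ne hjk with h | h
  · exact key j k h
  · exact (key k j h).symm

lemma den_pos {x : ℝ} (hx : 0 < x) : (0:ℝ) < Real.log 2 * (1 + x) := by
  have h2 : (0:ℝ) < Real.log 2 := Real.log_pos (by norm_num)
  positivity

lemma integrable_piece (k : ℕ+) :
    IntegrableOn (fun x => 1 / (Real.log 2 * (1 + x)))
      (Set.Ioc ((((k:ℕ):ℝ)+1)⁻¹) (((k:ℕ):ℝ)⁻¹)) volume := by
  have hk : (0:ℝ) < ((k:ℕ):ℝ) := by exact_mod_cast k.pos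
  have hcont : ContinuousOn (fun x => 1 / (Real.log 2 * (1 + x)))
      (Set.Icc ((((k:ℕ):ℝ)+1)⁻¹) (((k:ℕ):ℝ)⁻¹)) := by
    apply ContinuousOn.div continuousOn_const
    · exact (continuousOn_const.mul (continuousOn_const.add continuousOn_id))
    · intro x hx
      have hx0 : (0:ℝ) < x := lt_of_lt_of_le (by positivity) hx.1
      exact ne_of_gt (den_pos hx0)
  exact (hcont.integrableOn_compact isCompact_Icc).mono_set Set.Ioc_subset_Icc_self

lemma integral_piece (k : ℕ+) :
    ∫ x in Set.Ioc ((((k:ℕ):ℝ)+1)⁻¹) (((k:ℕ):ℝ)⁻¹), 1 / (Real.log 2 * (1 + x)) =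
      (1 / Real.log 2) * Real.log (1 + 1 / (((k:ℕ):ℝ) * (((k:ℕ):ℝ) + 2))) := by
  have hk : (0:ℝ) < ((k:ℕ):ℝ) := by exact_mod_cast k.pos
  set n : ℝ := ((k:ℕ):ℝ) with hn
  have hab : ((n+1)⁻¹ : ℝ) ≤ n⁻¹ := by
    apply inv_le_inv₀ (by positivity) (by positivity) |>.mpr; linarith
  rw [← intervalIntegral.integral_of_le hab]
  have h2 : (0:ℝ) < Real.log 2 := Real.log_pos (by norm_num)
  have heq : ∀ x : ℝ, 1 / (Real.log 2 * (1 + x)) = (1/Real.log 2) * (1+x)⁻¹ := by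
    intro x; rw [one_div, mul_inv, one_div]
  simp_rw [heq]
  rw [intervalIntegral.integral_const_mul]
  have hcomp : (∫ x in ((n+1)⁻¹:ℝ)..(n⁻¹:ℝ), (1+x)⁻¹) =
      ∫ x in (1+(n+1)⁻¹:ℝ)..(1+n⁻¹:ℝ), x⁻¹ := by
    rw [← intervalIntegral.integral_comp_add_left (fun x => x⁻¹) 1]
  rw [hcomp]
  rw [integral_inv]
  · congr 1
    have h1 : (0:ℝ) < 1 + (n+1)⁻¹ := by positivity
    field_simp
    ring_nf
  · intro h
    rcases Set.mem_uIcc.mp h with ⟨h1, _⟩ | ⟨h1, _⟩ <;> nlinarith [inv_pos.mpr (show (0:ℝ) < n+1 by positivity), inv_pos.mpr hk]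

lemma part1 :
    (∫ x, 2 * Real.log (⌊1 / x⌋₊ : ℝ) ∂gaussMeasure) =
      (2 / Real.log 2) *
        ∑' k : ℕ+, Real.log (k : ℕ) * Real.log (1 + 1 / (((k : ℕ) : ℝ) * (((k : ℕ) : ℝ) + 2))) := by
  have h2 : (0:ℝ) < Real.log 2 := Real.log_pos (by norm_num)
  have hg_meas : Measurable fun x : ℝ => ENNReal.ofReal (1 / (Real.log 2 * (1 + x))) :=
    (measurable_const.div (measurable_const.mul (measurable_const.add measurable_id))).ennreal_ofReal
  have hf_meas : Measurable fun x : ℝ => 2 * Real.log (⌊1 / x⌋₊ : ℝ) :=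
    measurable_const.mul (Real.measurable_log.comp
      (measurable_from_top.comp (measurable_const.div measurable_id).nat_floor))
  have hnn : 0 ≤ᵐ[gaussMeasure] fun x : ℝ => 2 * Real.log (⌊1 / x⌋₊ : ℝ) := by
    have h0 : ∀ᵐ x ∂(volume.restrict (Set.Ioo (0:ℝ) 1)),
        0 ≤ 2 * Real.log (⌊1 / x⌋₊ : ℝ) := by
      rw [ae_restrict_iff' measurableSet_Ioo]
      refine ae_of_all _ fun x hx => ?_
      have h1x : (1:ℝ) ≤ 1/x := by
        rw [le_div_iff₀ hx.1]; linarith [hx.2]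
      have : (1:ℝ) ≤ (⌊1/x⌋₊ : ℝ) := by
        exact_mod_cast Nat.le_floor (by exact_mod_cast h1x : ((1:ℕ):ℝ) ≤ 1/x)
      have := Real.log_nonneg this
      linarith
    exact (withDensity_absolutelyContinuous _ _).ae_le h0
  rw [integral_eq_lintegral_of_nonneg_ae hnn hf_meas.aestronglyMeasurable]
  rw [gaussMeasure, lintegral_withDensity_eq_lintegral_mul _ hg_meas
    (hf_meas.ennreal_ofReal)]
  simp only [Pi.mul_apply]
  rw [setLIntegral_congr (Ioo_ae_eq_Ioc), union_eq,
    lintegral_iUnion (fun _ => measurableSet_Ioc) pairwise_disjoint]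
  have hterm : ∀ k : ℕ+,
      (∫⁻ x in Set.Ioc ((((k:ℕ):ℝ)+1)⁻¹) (((k:ℕ):ℝ)⁻¹),
        ENNReal.ofReal (1 / (Real.log 2 * (1 + x))) *
          ENNReal.ofReal (2 * Real.log (⌊1 / x⌋₊ : ℝ)))
      = ENNReal.ofReal ((2 / Real.log 2) *
          (Real.log ((k:ℕ):ℝ) * Real.log (1 + 1 / (((k:ℕ):ℝ) * (((k:ℕ):ℝ) + 2))))) := by
    intro k
    rw [setLIntegral_congr_fun_ae measurableSet_Ioc (ae_of_all _ fun x hx => by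
      rw [floor_eq_on k hx] :
      ∀ᵐ x ∂volume, x ∈ Set.Ioc ((((k:ℕ):ℝ)+1)⁻¹) (((k:ℕ):ℝ)⁻¹) →
        ENNReal.ofReal (1 / (Real.log 2 * (1 + x))) *
          ENNReal.ofReal (2 * Real.log (⌊1 / x⌋₊ : ℝ)) =
        ENNReal.ofReal (1 / (Real.log 2 * (1 + x))) *
          ENNReal.ofReal (2 * Real.log ((k:ℕ):ℝ)))]
    rw [lintegral_mul_const _ hg_meas]
    have hk : (0:ℝ) < ((k:ℕ):ℝ) := by exact_mod_cast k.pos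
    have hpos_ae : ∀ᵐ x ∂(volume.restrict (Set.Ioc ((((k:ℕ):ℝ)+1)⁻¹) (((k:ℕ):ℝ)⁻¹))),
        0 ≤ 1 / (Real.log 2 * (1 + x)) := by
      rw [ae_restrict_iff' measurableSet_Ioc]
      refine ae_of_all _ fun x hx => ?_
      have hx0 : (0:ℝ) < x := lt_trans (by positivity : (0:ℝ) < (((k:ℕ):ℝ)+1)⁻¹) hx.1
      exact le_of_lt (div_pos one_pos (mul_pos h2 (by linarith)))
    rw [← ofReal_integral_eq_lintegral_ofReal (integrable_piece k) hpos_ae,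
      integral_piece k, ← ENNReal.ofReal_mul
        (mul_nonneg (le_of_lt (one_div_pos.mpr h2))
          (Real.log_nonneg (by
            have : (0:ℝ) < 1 / (((k:ℕ):ℝ) * (((k:ℕ):ℝ) + 2)) := by positivity
            linarith)))]
    congr 1
    ring
  simp_rw [hterm]
  rw [ENNReal.tsum_toReal_eq (fun k => ENNReal.ofReal_ne_top)]
  have : ∀ k : ℕ+, (ENNReal.ofReal ((2 / Real.log 2) *
      (Real.log ((k:ℕ):ℝ) * Real.log (1 + 1 / (((k:ℕ):ℝ) * (((k:ℕ):ℝ) + 2)))))).toReal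
      = (2 / Real.log 2) *
        (Real.log ((k:ℕ):ℝ) * Real.log (1 + 1 / (((k:ℕ):ℝ) * (((k:ℕ):ℝ) + 2)))) := by
    intro k
    exact ENNReal.toReal_ofReal (mul_nonneg (by positivity) (term_nonneg k))
  simp_rw [this]
  rw [tsum_mul_left]

/-- The integral of `2 log a₁(x)` against the Gauss measure equals
`(2/log 2) ∑_{k≥1} log k · log(1 + 1/(k(k+2))) = 2 log K₀`. -/
theorem integral_log_first_digit_gauss :
    (∫ x, 2 * Real.log (⌊1 / x⌋₊ : ℝ) ∂gaussMeasure) =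
        (2 / Real.log 2) *
          ∑' k : ℕ+, Real.log (k : ℕ) * Real.log (1 + 1 / (((k : ℕ) : ℝ) * (((k : ℕ) : ℝ) + 2))) ∧
      (2 / Real.log 2) *
          (∑' k : ℕ+, Real.log (k : ℕ) * Real.log (1 + 1 / (((k : ℕ) : ℝ) * (((k : ℕ) : ℝ) + 2))))
        = 2 * Real.log khintchine := by
  refine ⟨part1, ?_⟩
  rw [log_khintchine]
  ring
end

section
/- For the Gauss measure λ_g with density 1/(log 2 · (1+x)) on (0,1), one has ∫_0^1 2 log(x) / (log 2 · (1+x)) dx = −π²/(6 log 2), i.e. ∫_0^1 log(x)/(1+x) dx = −π²/12. -/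
open MeasureTheory Real

section aux

/-- antiderivative of `x^n log x` -/
noncomputable def Faux (n : ℕ) (x : ℝ) : ℝ :=
  x ^ (n + 1) * Real.log x / (n + 1) - x ^ (n + 1) / ((n + 1) ^ 2)

lemma Faux_deriv (n : ℕ) {x : ℝ} (hx : 0 < x) :
    HasDerivAt (Faux n) (x ^ n * Real.log x) x := by
  have h1 : HasDerivAt (fun y : ℝ => y ^ (n + 1)) (((n : ℝ) + 1) * x ^ n) x := by
    simpa using hasDerivAt_pow (n + 1) x
  have h2 : HasDerivAt Real.log x⁻¹ x := Real.hasDerivAt_log hx.ne'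
  have h3 : HasDerivAt (fun y => y ^ (n + 1) * Real.log y)
      (((n : ℝ) + 1) * x ^ n * Real.log x + x ^ (n + 1) * x⁻¹) x := h1.mul h2
  have h4 : HasDerivAt (Faux n)
      ((((n : ℝ) + 1) * x ^ n * Real.log x + x ^ (n + 1) * x⁻¹) / ((n : ℝ) + 1)
        - (((n : ℝ) + 1) * x ^ n) / (((n : ℝ) + 1) ^ 2) ) x := by
    unfold Faux
    exact (h3.div_const _).sub (h1.div_const _)
  convert h4 using 1
  have hx' : x ≠ 0 := hx.ne'
  have hn : ((n : ℝ) + 1) ≠ 0 := by positivity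
  field_simp
  ring

lemma Faux_contOn (n : ℕ) : ContinuousOn (Faux n) (Set.Icc 0 1) := by
  intro x hx
  rcases eq_or_lt_of_le hx.1 with h0 | h0
  · subst h0
    have hsub : Set.Icc (0:ℝ) 1 ⊆ insert 0 (Set.Ioi 0) := by
      intro y hy
      rcases eq_or_lt_of_le hy.1 with h | h
      · exact Or.inl h.symm
      · exact Or.inr h
    refine ContinuousWithinAt.mono ?_ hsub
    rw [continuousWithinAt_insert_self]
    have hF0 : Faux n 0 = 0 := by simp [Faux]
    have hlim : Filter.Tendsto (fun y : ℝ => Real.log y * y ^ ((n : ℝ) + 1))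
        (nhdsWithin 0 (Set.Ioi 0)) (nhds 0) :=
      tendsto_log_mul_rpow_nhdsGT_zero (by positivity)
    have hlim2 : Filter.Tendsto (fun y : ℝ => y ^ (n + 1) * Real.log y)
        (nhdsWithin 0 (Set.Ioi 0)) (nhds 0) := by
      refine hlim.congr' ?_
      filter_upwards [self_mem_nhdsWithin] with y hy
      rw [← Real.rpow_natCast y (n + 1)]
      push_cast
      ring
    have hlim3 : Filter.Tendsto (fun y : ℝ => y ^ (n + 1)) (nhdsWithin 0 (Set.Ioi 0))
        (nhds 0) := by
      have := (continuous_pow (n + 1)).tendsto (0 : ℝ)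
      simpa using this.mono_left nhdsWithin_le_nhds
    have htot : Filter.Tendsto (Faux n) (nhdsWithin 0 (Set.Ioi 0)) (nhds 0) := by
      have := (hlim2.div_const ((n : ℝ) + 1)).sub (hlim3.div_const (((n : ℝ) + 1) ^ 2))
      unfold Faux
      simpa using this
    show Filter.Tendsto (Faux n) (nhdsWithin 0 (Set.Ioi 0)) (nhds (Faux n 0))
    rw [hF0]
    exact htot
  · exact (Faux_deriv n h0).continuousAt.continuousWithinAt

lemma integrableOn_pow_log (n : ℕ) :
    IntegrableOn (fun x => x ^ n * Real.log x) (Set.Ioo (0:ℝ) 1) volume := by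
  have h : IntegrableOn (fun x => -(x ^ n * Real.log x)) (Set.Ioc (0:ℝ) 1) volume := by
    refine intervalIntegral.integrableOn_deriv_of_nonneg ((Faux_contOn n).neg) ?_ ?_
    · intro x hx
      exact (Faux_deriv n hx.1).neg
    · intro x hx
      have h1 : Real.log x ≤ 0 := Real.log_nonpos hx.1.le hx.2.le
      have h2 : (0:ℝ) ≤ x ^ n := pow_nonneg hx.1.le n
      nlinarith
  have h2 : IntegrableOn (fun x => x ^ n * Real.log x) (Set.Ioc (0:ℝ) 1) volume :=
    h.neg.congr (Filter.Eventually.of_forall fun x => by simp)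
  exact h2.mono_set Set.Ioo_subset_Ioc_self

lemma integral_pow_log (n : ℕ) :
    ∫ x in Set.Ioo (0 : ℝ) 1, x ^ n * Real.log x = -(1 / ((n : ℝ) + 1) ^ 2) := by
  have hint : IntervalIntegrable (fun x => x ^ n * Real.log x) volume 0 1 := by
    rw [intervalIntegrable_iff_integrableOn_Ioo_of_le zero_le_one]
    exact integrableOn_pow_log n
  have h := intervalIntegral.integral_eq_sub_of_hasDeriv_right_of_le (a := 0) (b := 1)
    zero_le_one (Faux_contOn n)
    (fun x hx => (Faux_deriv n hx.1).hasDerivWithinAt) hint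
  have hval : Faux n 1 - Faux n 0 = -(1 / ((n : ℝ) + 1) ^ 2) := by
    simp [Faux]
  rw [intervalIntegral.integral_of_le zero_le_one, integral_Ioc_eq_integral_Ioo] at h
  rw [h, hval]

lemma hasSum_inv_succ_sq : HasSum (fun n : ℕ => 1 / ((n : ℝ) + 1) ^ 2) (π ^ 2 / 6) := by
  have h : HasSum (fun n : ℕ => (1 : ℝ) / ((n + 1 : ℕ) : ℝ) ^ 2) (π ^ 2 / 6) := by
    rw [hasSum_nat_add_iff (f := fun n : ℕ => (1 : ℝ) / (n : ℝ) ^ 2) 1]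
    simpa using hasSum_zeta_two
  have heq : (fun n : ℕ => (1 : ℝ) / ((n + 1 : ℕ) : ℝ) ^ 2)
      = fun n : ℕ => 1 / ((n : ℝ) + 1) ^ 2 := by
    funext n; push_cast; ring
  rwa [heq] at h

lemma hasSum_eta_two : HasSum (fun n : ℕ => (-1 : ℝ) ^ n / ((n : ℝ) + 1) ^ 2) (π ^ 2 / 12) := by
  have hζ := hasSum_inv_succ_sq
  set a : ℕ → ℝ := fun n => (-1 : ℝ) ^ n / ((n : ℝ) + 1) ^ 2 with ha
  have hodd : HasSum (fun k : ℕ => 1 / (((2 * k + 1 : ℕ) : ℝ) + 1) ^ 2) (π ^ 2 / 24) := by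
    have h14 := hζ.mul_left (1 / 4 : ℝ)
    have heq : (fun k : ℕ => (1 / 4 : ℝ) * (1 / ((k : ℝ) + 1) ^ 2))
        = fun k : ℕ => 1 / (((2 * k + 1 : ℕ) : ℝ) + 1) ^ 2 := by
      funext k
      push_cast
      have hk : ((k : ℝ) + 1) ≠ 0 := by positivity
      field_simp
      ring
    rw [heq] at h14
    rwa [show (π ^ 2 / 24 : ℝ) = 1 / 4 * (π ^ 2 / 6) by ring]
  have hevenS : Summable (fun k : ℕ => 1 / (((2 * k : ℕ) : ℝ) + 1) ^ 2) := by
    have hinj : Function.Injective (fun k : ℕ => 2 * k) := fun p q h => by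
      dsimp at h; omega
    exact hζ.summable.comp_injective hinj
  obtain ⟨e, he⟩ := hevenS
  have htot := HasSum.even_add_odd (f := fun n : ℕ => 1 / ((n : ℝ) + 1) ^ 2) he hodd
  have hee : e + π ^ 2 / 24 = π ^ 2 / 6 := htot.unique hζ
  have he8 : e = π ^ 2 / 8 := by linarith
  rw [he8] at he
  have heven' : HasSum (fun k : ℕ => a (2 * k)) (π ^ 2 / 8) := by
    have heq : (fun k : ℕ => a (2 * k)) = fun k : ℕ => 1 / (((2 * k : ℕ) : ℝ) + 1) ^ 2 := by
      funext k
      rw [ha]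
      simp only
      rw [pow_mul]
      norm_num
    rw [heq]
    exact he
  have hodd' : HasSum (fun k : ℕ => a (2 * k + 1)) (-(π ^ 2 / 24)) := by
    have heq : (fun k : ℕ => a (2 * k + 1))
        = fun k : ℕ => -(1 / (((2 * k + 1 : ℕ) : ℝ) + 1) ^ 2) := by
      funext k
      rw [ha]
      simp only
      rw [pow_succ, pow_mul]
      push_cast
      norm_num
      ring
    rw [heq]
    exact hodd.neg
  have := HasSum.even_add_odd (f := a) heven' hodd'
  convert this using 1
  ring

end aux

/-- The Lyapunov integral of the Gauss map: `∫₀¹ 2 log x/(log 2 (1+x)) dx = −π²/(6 log 2)`,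
equivalently `∫₀¹ log x/(1+x) dx = −π²/12`. -/
theorem lyapunov_integral_gauss :
    (∫ x in Set.Ioo (0 : ℝ) 1, 2 * Real.log x / (Real.log 2 * (1 + x))) =
        -π ^ 2 / (6 * Real.log 2) ∧
      (∫ x in Set.Ioo (0 : ℝ) 1, Real.log x / (1 + x)) = -π ^ 2 / 12 := by
  have key : (∫ x in Set.Ioo (0 : ℝ) 1, Real.log x / (1 + x)) = -π ^ 2 / 12 := by
    have hF_int : ∀ n : ℕ, Integrable (fun x => (-1 : ℝ) ^ n * (x ^ n * Real.log x))
        (volume.restrict (Set.Ioo (0:ℝ) 1)) :=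
      fun n => (integrableOn_pow_log n).const_mul _
    have hnorm : ∀ n : ℕ, (∫ x in Set.Ioo (0:ℝ) 1, ‖(-1 : ℝ) ^ n * (x ^ n * Real.log x)‖)
        = 1 / ((n : ℝ) + 1) ^ 2 := by
      intro n
      have heq : ∀ x ∈ Set.Ioo (0:ℝ) 1,
          ‖(-1 : ℝ) ^ n * (x ^ n * Real.log x)‖ = -(x ^ n * Real.log x) := by
        intro x hx
        have h1 : Real.log x ≤ 0 := Real.log_nonpos hx.1.le hx.2.le
        simp only [norm_mul, norm_pow, norm_neg, norm_one, one_pow, one_mul,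
          Real.norm_eq_abs]
        rw [abs_of_nonpos h1, abs_of_pos hx.1]
        ring
      rw [setIntegral_congr_fun measurableSet_Ioo heq, integral_neg, integral_pow_log]
      ring
    have hF_sum : Summable (fun n : ℕ =>
        ∫ x in Set.Ioo (0:ℝ) 1, ‖(-1 : ℝ) ^ n * (x ^ n * Real.log x)‖) := by
      simp_rw [hnorm]
      exact hasSum_inv_succ_sq.summable
    have hswap := MeasureTheory.integral_tsum_of_summable_integral_norm hF_int hF_sum
    have hLHS : (∑' n : ℕ, ∫ x in Set.Ioo (0:ℝ) 1, (-1 : ℝ) ^ n * (x ^ n * Real.log x))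
        = -(π ^ 2 / 12) := by
      have hterm : ∀ n : ℕ, (∫ x in Set.Ioo (0:ℝ) 1, (-1 : ℝ) ^ n * (x ^ n * Real.log x))
          = -((-1 : ℝ) ^ n / ((n : ℝ) + 1) ^ 2) := by
        intro n
        rw [MeasureTheory.integral_const_mul, integral_pow_log]
        ring
      simp_rw [hterm]
      exact hasSum_eta_two.neg.tsum_eq
    have hRHS : (∫ x in Set.Ioo (0:ℝ) 1, ∑' n : ℕ, (-1 : ℝ) ^ n * (x ^ n * Real.log x))
        = ∫ x in Set.Ioo (0:ℝ) 1, Real.log x / (1 + x) := by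
      refine setIntegral_congr_fun measurableSet_Ioo ?_
      intro x hx
      have hx1 : ‖-x‖ < 1 := by
        rw [norm_neg, Real.norm_eq_abs, abs_of_pos hx.1]
        exact hx.2
      have hgeom : (∑' n : ℕ, (-x) ^ n) = (1 - -x)⁻¹ := tsum_geometric_of_norm_lt_one hx1
      have hstep : (∑' n : ℕ, (-1 : ℝ) ^ n * (x ^ n * Real.log x))
          = (∑' n : ℕ, (-x) ^ n) * Real.log x := by
        rw [← tsum_mul_right]
        refine tsum_congr fun n => ?_
        rw [neg_pow]
        ring
      show (∑' n : ℕ, (-1 : ℝ) ^ n * (x ^ n * Real.log x)) = Real.log x / (1 + x)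
      rw [hstep, hgeom, sub_neg_eq_add, inv_mul_eq_div]
    have hfinal := (hswap.trans hRHS).symm.trans hLHS
    rw [hfinal]
    ring
  refine ⟨?_, key⟩
  have hlog2 : Real.log 2 ≠ 0 := (Real.log_pos one_lt_two).ne'
  have heq : (fun x : ℝ => 2 * Real.log x / (Real.log 2 * (1 + x)))
      = fun x : ℝ => (2 / Real.log 2) * (Real.log x / (1 + x)) := by
    funext x
    rw [div_mul_div_comm]
  rw [heq, MeasureTheory.integral_const_mul, key]
  field_simp
  ring
end

section
/- For every 0 < ε < 1/2, setting N(ε) := (ε/3)^{−2/ε} and β(ε) := (3/log 2) · log(ε) · (ε/3)^{−4/ε}, one has ∑_{(k,l)∈ℕ²} (kl)^{−(1+ε)} (1 + 1/(k(l+1)))^{2β(ε)} < 1. -/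
open Real Finset

/-- Step inequality: `ε·(x+1)^{-(1+ε)} ≤ x^{-ε} - (x+1)^{-ε}` for `x ≥ 1`, `0 < ε ≤ 1`. -/
private lemma rpow_step {ε : ℝ} (hε0 : 0 < ε) (hε1 : ε ≤ 1) {x : ℝ} (hx : 1 ≤ x) :
    ε * (x + 1) ^ (-(1 + ε)) ≤ x ^ (-ε) - (x + 1) ^ (-ε) := by
  have hy0 : (0:ℝ) < x + 1 := by linarith
  have hx0 : (0:ℝ) < x := by linarith
  set s : ℝ := 1 / (x + 1) with hs
  have hs0 : 0 < s := by positivity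
  have hs12 : s ≤ 1 / 2 := by
    rw [hs, div_le_div_iff₀ hy0 (by norm_num)]; linarith
  -- Bernoulli: (1 - s)^ε ≤ 1 - ε s
  have hber : (1 + -s) ^ ε ≤ 1 + ε * (-s) :=
    rpow_one_add_le_one_add_mul_self (by linarith) hε0.le hε1
  have h1s : (0:ℝ) < 1 - s := by linarith
  have hεs : ε * s ≤ 1 / 2 := by nlinarith
  have hbpos : (0:ℝ) < (1 - s) ^ ε := rpow_pos_of_pos h1s ε
  have hb' : (1 - s) ^ ε ≤ 1 - ε * s := by
    have h := hber
    rw [show (1 + -s) = 1 - s by ring] at h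
    linarith
  -- (1 + εs) * (1-s)^ε ≤ 1
  have h3 : (1 + ε * s) * (1 - s) ^ ε ≤ 1 := by
    nlinarith [mul_le_mul_of_nonneg_left hb' (show (0:ℝ) ≤ 1 + ε * s by positivity),
      sq_nonneg (ε * s)]
  have h4 : 1 + ε * s ≤ (1 - s) ^ (-ε) := by
    rw [Real.rpow_neg h1s.le, ← one_div, le_div_iff₀ hbpos]
    exact h3
  -- x = (x+1) * (1-s)
  have hxe : x = (x + 1) * (1 - s) := by
    rw [hs]
    field_simp
    ring
  have h6 : x ^ (-ε) = (x + 1) ^ (-ε) * (1 - s) ^ (-ε) := by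
    nth_rewrite 1 [hxe]
    rw [Real.mul_rpow hy0.le h1s.le]
  have hy : (0:ℝ) < (x + 1) ^ (-ε) := rpow_pos_of_pos hy0 _
  have h7 : (x + 1) ^ (-ε) * (1 + ε * s) ≤ x ^ (-ε) := by
    rw [h6]
    exact mul_le_mul_of_nonneg_left h4 hy.le
  -- (x+1)^(-ε) * s = (x+1)^(-(1+ε))
  have h8 : (x + 1) ^ (-ε) * s = (x + 1) ^ (-(1 + ε)) := by
    rw [hs, one_div, ← Real.rpow_neg_one (x + 1), ← Real.rpow_add hy0]
    ring_nf
  nlinarith [h7, h8]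

/-- Telescoping tail bound: `∑_{k < i ≤ n} i^{-(1+ε)} ≤ k^{-ε}/ε`. -/
private lemma sum_Ioc_rpow_le {ε : ℝ} (hε0 : 0 < ε) (hε1 : ε ≤ 1) {k n : ℕ} (hk : 1 ≤ k)
    (h : k ≤ n) : ∑ i ∈ Finset.Ioc k n, ((i : ℝ)) ^ (-(1 + ε)) ≤ ((k : ℝ) ^ (-ε)) / ε := by
  have key : ε * ∑ i ∈ Finset.Ioc k n, ((i : ℝ)) ^ (-(1 + ε))
      ≤ (k : ℝ) ^ (-ε) - (n : ℝ) ^ (-ε) := by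
    induction n, h using Nat.le_induction with
    | base => simp
    | succ n hn IH =>
      rw [Finset.sum_Ioc_succ_top hn, mul_add]
      have hx : (1:ℝ) ≤ (n : ℝ) := by exact_mod_cast hk.trans hn
      have step := rpow_step hε0 hε1 hx
      push_cast
      push_cast at IH
      linarith
  have hnn : (0:ℝ) ≤ (n : ℝ) ^ (-ε) := Real.rpow_nonneg (Nat.cast_nonneg n) _
  rw [le_div_iff₀ hε0]
  nlinarith [key]

private lemma summable_u {ε : ℝ} (hε0 : 0 < ε) :
    Summable (fun n : ℕ+ => ((n : ℕ) : ℝ) ^ (-(1 + ε))) := by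
  have h : Summable (fun n : ℕ => ((n : ℝ)) ^ (-(1 + ε))) := by
    rw [Real.summable_nat_rpow]; linarith
  exact h.comp_injective PNat.coe_injective

private lemma summable_v {ε : ℝ} (hε0 : 0 < ε) (m : ℕ) :
    Summable (fun n : ℕ+ => if m < (n : ℕ) then ((n : ℕ) : ℝ) ^ (-(1 + ε)) else 0) := by
  apply Summable.of_nonneg_of_le (fun n => ?_) (fun n => ?_) (summable_u hε0)
  · split_ifs <;> positivity
  · split_ifs
    · exact le_rfl
    · positivity

/-- Tail bound for the `ℕ+` sum. -/
private lemma tail_tsum_le {ε : ℝ} (hε0 : 0 < ε) (hε1 : ε ≤ 1) {m : ℕ} (hm : 1 ≤ m) :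
    (∑' n : ℕ+, if m < (n : ℕ) then ((n : ℕ) : ℝ) ^ (-(1 + ε)) else 0)
      ≤ (m : ℝ) ^ (-ε) / ε := by
  classical
  refine Summable.tsum_le_of_sum_le (summable_v hε0 m) (fun s => ?_)
  have himg : ∑ n ∈ s, (if m < (n : ℕ) then ((n : ℕ) : ℝ) ^ (-(1 + ε)) else 0)
      = ∑ i ∈ s.image (fun n : ℕ+ => (n : ℕ)),
          (if m < i then (i : ℝ) ^ (-(1 + ε)) else 0) := by
    rw [Finset.sum_image (fun x _ y _ h => PNat.coe_injective h)]
  rw [himg]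
  set t := s.image (fun n : ℕ+ => (n : ℕ)) with ht
  set K := m + t.sup id with hK
  have hsubset : t.filter (fun i => m < i) ⊆ Finset.Ioc m K := by
    intro i hi
    rw [Finset.mem_filter] at hi
    rw [Finset.mem_Ioc]
    refine ⟨hi.2, ?_⟩
    calc i = id i := rfl
      _ ≤ t.sup id := Finset.le_sup hi.1
      _ ≤ K := Nat.le_add_left _ _
  calc ∑ i ∈ t, (if m < i then (i : ℝ) ^ (-(1 + ε)) else 0)
      = ∑ i ∈ t.filter (fun i => m < i), (i : ℝ) ^ (-(1 + ε)) :=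
        (Finset.sum_filter _ _).symm
    _ ≤ ∑ i ∈ Finset.Ioc m K, (i : ℝ) ^ (-(1 + ε)) := by
        apply Finset.sum_le_sum_of_subset_of_nonneg hsubset
        intro i _ _; positivity
    _ ≤ (m : ℝ) ^ (-ε) / ε := sum_Ioc_rpow_le hε0 hε1 hm (Nat.le_add_right _ _)

/-- Zeta-type bound: `∑_{n ≥ 1} n^{-(1+ε)} ≤ 1 + 1/ε`. -/
private lemma zeta_tsum_le {ε : ℝ} (hε0 : 0 < ε) (hε1 : ε ≤ 1) :
    (∑' n : ℕ+, ((n : ℕ) : ℝ) ^ (-(1 + ε))) ≤ 1 + 1 / ε := by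
  classical
  have hu := summable_u hε0
  rw [Summable.tsum_eq_add_tsum_ite hu 1]
  have h1 : (((1 : ℕ+) : ℕ) : ℝ) ^ (-(1 + ε)) = 1 := by norm_num
  rw [h1]
  have hle : (∑' n : ℕ+, if n = 1 then 0 else ((n : ℕ) : ℝ) ^ (-(1 + ε)))
      ≤ ∑' n : ℕ+, if 1 < (n : ℕ) then ((n : ℕ) : ℝ) ^ (-(1 + ε)) else 0 := by
    apply Summable.tsum_le_tsum _ _ (summable_v hε0 1)
    · intro n
      by_cases hn : n = 1
      · subst hn; simp
      · have h2 : 1 < (n : ℕ) :=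
          Nat.lt_of_le_of_ne n.one_le (fun h => hn (PNat.coe_injective h.symm))
        rw [if_neg hn, if_pos h2]
    · apply Summable.of_nonneg_of_le (fun n => ?_) (fun n => ?_) hu
      · split_ifs <;> positivity
      · split_ifs
        · positivity
        · exact le_rfl
  have htail := tail_tsum_le hε0 hε1 (le_refl 1)
  have h1ε : ((1 : ℕ) : ℝ) ^ (-ε) / ε = 1 / ε := by norm_num
  rw [h1ε] at htail
  linarith [hle.trans htail]

private lemma final_numeric {ε Z T : ℝ} (hε0 : 0 < ε) (hε : ε < 1 / 2)
    (hZ0 : 0 ≤ Z) (hT0 : 0 ≤ T) (hZle : Z ≤ 1 + 1 / ε) (hTle : T ≤ ε / 6) :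
    ε ^ (15:ℕ) * (Z * Z) + T * Z + Z * T < 1 := by
  have hZ2 : Z * Z ≤ (1 + 1 / ε) ^ 2 := by nlinarith
  have hTZ : T * Z ≤ (ε / 6) * (1 + 1 / ε) := by nlinarith
  have h1 : ε ^ (15:ℕ) * (Z * Z) ≤ ε ^ (15:ℕ) * (1 + 1 / ε) ^ 2 := by
    apply mul_le_mul_of_nonneg_left hZ2 (by positivity)
  have hId : ε ^ (15:ℕ) * (1 + 1 / ε) ^ 2 = ε ^ (13:ℕ) * (ε + 1) ^ 2 := by
    field_simp
  have hId2 : (ε / 6) * (1 + 1 / ε) = (ε + 1) / 6 := by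
    field_simp
  have hpow : ε ^ (13:ℕ) ≤ (1/2 : ℝ) ^ (12:ℕ) * ε := by
    have h12 : ε ^ (12:ℕ) ≤ (1/2 : ℝ) ^ (12:ℕ) :=
      pow_le_pow_left₀ hε0.le (by linarith) 12
    calc ε ^ (13:ℕ) = ε ^ (12:ℕ) * ε := by ring
      _ ≤ (1/2 : ℝ) ^ (12:ℕ) * ε := mul_le_mul_of_nonneg_right h12 hε0.le
  have hb1 : ε ^ (13:ℕ) * (ε + 1) ^ 2 ≤ ((1/2:ℝ) ^ (12:ℕ) * ε) * (ε + 1) ^ 2 := by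
    apply mul_le_mul_of_nonneg_right hpow (by positivity)
  have hnum : ((1/2:ℝ) ^ (12:ℕ)) = 1 / 4096 := by norm_num
  nlinarith [hTZ, h1, hId, hId2, hb1, hnum]

set_option maxHeartbeats 1000000 in
/-- For every `0 < ε < 1/2`, with `β(ε) := (3/log 2) · log ε · (ε/3)^{−4/ε}`, the double
series `∑_{(k,l)∈ℕ²} (kl)^{−(1+ε)} (1 + 1/(k(l+1)))^{2β(ε)}` is strictly less than `1`. -/
theorem key_double_sum_lt_one (ε : ℝ) (hε0 : 0 < ε) (hε : ε < 1 / 2) :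
    (∑' p : ℕ+ × ℕ+,
        (((p.1 : ℕ) : ℝ) * ((p.2 : ℕ) : ℝ)) ^ (-(1 + ε)) *
          (1 + 1 / (((p.1 : ℕ) : ℝ) * (((p.2 : ℕ) : ℝ) + 1))) ^
            (2 * (3 / Real.log 2 * Real.log ε * (ε / 3) ^ (-4 / ε)))) < 1 := by
  classical
  have hε1 : ε ≤ 1 := by linarith
  have hεne : ε ≠ 0 := hε0.ne'
  have hlog2 : (0:ℝ) < Real.log 2 := Real.log_pos one_lt_two
  set β2 : ℝ := 2 * (3 / Real.log 2 * Real.log ε * (ε / 3) ^ (-4 / ε)) with hβ2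
  have hlogε : Real.log ε < 0 := Real.log_neg hε0 (by linarith)
  have hppos : (0:ℝ) < (ε / 3) ^ (-4 / ε) := Real.rpow_pos_of_pos (by positivity) _
  have h3pos : (0:ℝ) < 3 / Real.log 2 := by positivity
  have hβ2neg : β2 ≤ 0 := by
    have h := mul_pos h3pos hppos
    nlinarith
  -- the split point
  set M : ℝ := (6 / ε ^ 2) ^ (1 / ε) with hMdef
  have hbase : (24:ℝ) ≤ 6 / ε ^ 2 := by
    rw [le_div_iff₀ (by positivity)]; nlinarith
  have h1ε2 : (2:ℝ) ≤ 1 / ε := by rw [le_div_iff₀ hε0]; linarith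
  have hM24 : (24:ℝ) ≤ M := by
    calc (24:ℝ) ≤ 6 / ε ^ 2 := hbase
      _ = (6 / ε ^ 2) ^ (1:ℝ) := (Real.rpow_one _).symm
      _ ≤ M := Real.rpow_le_rpow_of_exponent_le (by linarith) (by linarith)
  have hMpos : (0:ℝ) < M := by linarith
  set m : ℕ := ⌈M⌉₊ with hmdef
  have hm1 : 1 ≤ m := Nat.one_le_ceil_iff.2 hMpos
  have hmM : M ≤ (m : ℝ) := Nat.le_ceil M
  have hmM1 : (m : ℝ) ≤ M + 1 := (Nat.ceil_lt_add_one hMpos.le).le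
  -- basic functions
  set u : ℕ+ → ℝ := fun n => ((n : ℕ) : ℝ) ^ (-(1 + ε)) with hudef
  set v : ℕ+ → ℝ := fun n => if m < (n : ℕ) then ((n : ℕ) : ℝ) ^ (-(1 + ε)) else 0 with hvdef
  have hu : Summable u := summable_u hε0
  have hv : Summable v := summable_v hε0 m
  have hun : ∀ n, 0 ≤ u n := fun n => Real.rpow_nonneg (Nat.cast_nonneg _) _
  have hvn : ∀ n, 0 ≤ v n := by
    intro n; rw [hvdef]; dsimp only; split_ifs
    · exact Real.rpow_nonneg (Nat.cast_nonneg _) _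
    · exact le_rfl
  have hvu : ∀ n, v n ≤ u n := by
    intro n; rw [hvdef, hudef]; dsimp only; split_ifs
    · exact le_rfl
    · exact Real.rpow_nonneg (Nat.cast_nonneg _) _
  -- exponent arithmetic
  have hM2 : M ^ 2 = (6 / ε ^ 2) ^ (2 / ε) := by
    rw [hMdef, ← Real.rpow_natCast ((6 / ε ^ 2) ^ (1 / ε)) 2, ← Real.rpow_mul (by positivity)]
    congr 1
    push_cast
    ring
  have hkey : (ε / 3) ^ (-4 / ε) = (9 / 4 : ℝ) ^ (1 / ε) * (6 / ε ^ 2) ^ (2 / ε) := by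
    rw [show (-4 / ε : ℝ) = (-4 : ℝ) * (1 / ε) by ring,
        show (2 / ε : ℝ) = (2 : ℝ) * (1 / ε) by ring,
        Real.rpow_mul (by positivity : (0:ℝ) ≤ ε / 3),
        Real.rpow_mul (by positivity : (0:ℝ) ≤ 6 / ε ^ 2),
        ← Real.mul_rpow (by positivity) (by positivity)]
    congr 1
    rw [show ((-4 : ℝ)) = ((-4 : ℤ) : ℝ) by norm_num, Real.rpow_intCast,
        show ((2 : ℝ)) = ((2 : ℕ) : ℝ) by norm_num, Real.rpow_natCast]
    rw [zpow_neg, show ((4:ℤ)) = ((4:ℕ) : ℤ) by norm_num, zpow_natCast]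
    field_simp
    ring
  have hQpos : (0:ℝ) < (6 / ε ^ 2) ^ (2 / ε) := Real.rpow_pos_of_pos (by positivity) _
  have harith : (1 / (2 * M ^ 2) * Real.log 2) * β2
      = Real.log ε * (3 * (9 / 4 : ℝ) ^ (1 / ε)) := by
    rw [hβ2, hkey, hM2]
    field_simp
  have hc15 : (15:ℝ) ≤ 3 * (9 / 4 : ℝ) ^ (1 / ε) := by
    have h1 : ((9:ℝ) / 4) ^ (2:ℝ) ≤ (9 / 4 : ℝ) ^ (1 / ε) :=
      Real.rpow_le_rpow_of_exponent_le (by norm_num) h1ε2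
    have h2 : ((9:ℝ) / 4) ^ (2:ℝ) = 81 / 16 := by
      rw [show ((2:ℝ)) = ((2:ℕ) : ℝ) by norm_num, Real.rpow_natCast]; norm_num
    rw [h2] at h1; linarith
  -- the finite-part factor bound
  have hC : ∀ k l : ℕ+, (k : ℕ) ≤ m → (l : ℕ) ≤ m →
      (1 + 1 / (((k : ℕ) : ℝ) * (((l : ℕ) : ℝ) + 1))) ^ β2 ≤ ε ^ (15 : ℕ) := by
    intro k l hk hl
    have hk1 : (1:ℝ) ≤ ((k : ℕ) : ℝ) := by exact_mod_cast k.one_le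
    have hl1 : (1:ℝ) ≤ ((l : ℕ) : ℝ) := by exact_mod_cast l.one_le
    have hkm : ((k : ℕ) : ℝ) ≤ M + 1 := le_trans (by exact_mod_cast Nat.cast_le.2 hk) hmM1
    have hlm : ((l : ℕ) : ℝ) ≤ M + 1 := le_trans (by exact_mod_cast Nat.cast_le.2 hl) hmM1
    set d : ℝ := ((k : ℕ) : ℝ) * (((l : ℕ) : ℝ) + 1) with hd
    have hd2 : (2:ℝ) ≤ d := by nlinarith
    have hdpos : (0:ℝ) < d := by linarith
    have hdM : d ≤ 2 * M ^ 2 := by nlinarith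
    set x : ℝ := 1 / d with hx
    have hx0 : 0 < x := by positivity
    have hx1 : x ≤ 1 := by rw [hx, div_le_one hdpos]; linarith
    have hxl : 1 / (2 * M ^ 2) ≤ x := by
      rw [hx]
      exact one_div_le_one_div_of_le hdpos hdM
    have hlog : x * Real.log 2 ≤ Real.log (1 + x) := by
      have hber : (1 + 1 : ℝ) ^ x ≤ 1 + x * 1 :=
        rpow_one_add_le_one_add_mul_self (by norm_num) hx0.le hx1
      have h2x : Real.log ((2:ℝ) ^ x) = x * Real.log 2 := Real.log_rpow (by norm_num) x
      have hpos2 : (0:ℝ) < (2:ℝ) ^ x := Real.rpow_pos_of_pos (by norm_num) x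
      calc x * Real.log 2 = Real.log ((2:ℝ) ^ x) := h2x.symm
        _ ≤ Real.log (1 + x) := by
            apply Real.log_le_log hpos2
            have h11 : ((1:ℝ) + 1) = 2 := by norm_num
            rw [h11] at hber
            linarith
    have h1x : (0:ℝ) < 1 + x := by linarith
    calc (1 + x) ^ β2 = Real.exp (Real.log (1 + x) * β2) := Real.rpow_def_of_pos h1x β2
      _ ≤ Real.exp ((1 / (2 * M ^ 2) * Real.log 2) * β2) := by
          apply Real.exp_le_exp.2
          have h0 : (1 / (2 * M ^ 2)) * Real.log 2 ≤ Real.log (1 + x) :=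
            le_trans (mul_le_mul_of_nonneg_right hxl hlog2.le) hlog
          exact mul_le_mul_of_nonpos_right h0 hβ2neg
      _ = Real.exp (Real.log ε * (3 * (9 / 4 : ℝ) ^ (1 / ε))) := by rw [harith]
      _ = ε ^ (3 * (9 / 4 : ℝ) ^ (1 / ε)) := (Real.rpow_def_of_pos hε0 _).symm
      _ ≤ ε ^ (15:ℝ) := Real.rpow_le_rpow_of_exponent_ge hε0 hε1 hc15
      _ = ε ^ (15:ℕ) := by
          rw [show ((15:ℝ)) = ((15:ℕ) : ℝ) by norm_num, Real.rpow_natCast]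
  -- sums
  set T : ℝ := ∑' n : ℕ+, v n with hTdef
  set Z : ℝ := ∑' n : ℕ+, u n with hZdef
  have hZ0 : 0 ≤ Z := tsum_nonneg hun
  have hT0 : 0 ≤ T := tsum_nonneg hvn
  have hZle : Z ≤ 1 + 1 / ε := zeta_tsum_le hε0 hε1
  have hMeps : M ^ (-ε) = ε ^ 2 / 6 := by
    rw [hMdef, ← Real.rpow_mul (by positivity),
        show (1 / ε * -ε : ℝ) = -1 by field_simp,
        Real.rpow_neg_one, inv_div]
  have hTle : T ≤ ε / 6 := by
    have h1 : T ≤ (m : ℝ) ^ (-ε) / ε := tail_tsum_le hε0 hε1 hm1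
    have h2 : (m : ℝ) ^ (-ε) ≤ M ^ (-ε) := by
      rw [Real.rpow_neg (by positivity), Real.rpow_neg hMpos.le]
      exact inv_anti₀ (Real.rpow_pos_of_pos hMpos ε)
        (Real.rpow_le_rpow hMpos.le hmM hε0.le)
    have h3 : T ≤ (ε ^ 2 / 6) / ε := by
      calc T ≤ (m : ℝ) ^ (-ε) / ε := h1
        _ ≤ M ^ (-ε) / ε := by gcongr
        _ = (ε ^ 2 / 6) / ε := by rw [hMeps]
    calc T ≤ (ε ^ 2 / 6) / ε := h3
      _ = ε / 6 := by field_simp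
  -- summability of products
  have huu : Summable (fun p : ℕ+ × ℕ+ => u p.1 * u p.2) :=
    hu.mul_of_nonneg hu hun hun
  have hvuP : Summable (fun p : ℕ+ × ℕ+ => v p.1 * u p.2) :=
    hv.mul_of_nonneg hu hvn hun
  have huvP : Summable (fun p : ℕ+ × ℕ+ => u p.1 * v p.2) :=
    hu.mul_of_nonneg hv hun hvn
  -- pointwise domination
  have hfactor : ∀ k l : ℕ+,
      (1 + 1 / (((k : ℕ) : ℝ) * (((l : ℕ) : ℝ) + 1))) ^ β2 ≤ 1 := by
    intro k l
    apply Real.rpow_le_one_of_one_le_of_nonpos _ hβ2neg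
    have hk1 : (1:ℝ) ≤ ((k : ℕ) : ℝ) := by exact_mod_cast k.one_le
    have hl1 : (1:ℝ) ≤ ((l : ℕ) : ℝ) := by exact_mod_cast l.one_le
    have : (0:ℝ) < ((k : ℕ) : ℝ) * (((l : ℕ) : ℝ) + 1) := by nlinarith
    have : (0:ℝ) < 1 / (((k : ℕ) : ℝ) * (((l : ℕ) : ℝ) + 1)) := by positivity
    linarith
  have hprod : ∀ k l : ℕ+,
      ((((k : ℕ) : ℝ)) * (((l : ℕ) : ℝ))) ^ (-(1 + ε)) = u k * u l := by
    intro k l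
    rw [hudef]
    exact Real.mul_rpow (Nat.cast_nonneg _) (Nat.cast_nonneg _)
  have hdom : ∀ p : ℕ+ × ℕ+,
      (((p.1 : ℕ) : ℝ) * ((p.2 : ℕ) : ℝ)) ^ (-(1 + ε)) *
          (1 + 1 / (((p.1 : ℕ) : ℝ) * (((p.2 : ℕ) : ℝ) + 1))) ^ β2
        ≤ ε ^ (15:ℕ) * (u p.1 * u p.2) + v p.1 * u p.2 + u p.1 * v p.2 := by
    rintro ⟨k, l⟩
    dsimp only
    rw [hprod k l]
    have hfac0 : (0:ℝ) ≤ (1 + 1 / (((k : ℕ) : ℝ) * (((l : ℕ) : ℝ) + 1))) ^ β2 := by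
      apply Real.rpow_nonneg
      have hk1 : (1:ℝ) ≤ ((k : ℕ) : ℝ) := by exact_mod_cast k.one_le
      have hl1 : (1:ℝ) ≤ ((l : ℕ) : ℝ) := by exact_mod_cast l.one_le
      have : (0:ℝ) ≤ 1 / (((k : ℕ) : ℝ) * (((l : ℕ) : ℝ) + 1)) := by positivity
      linarith
    have huu0 : 0 ≤ u k * u l := mul_nonneg (hun k) (hun l)
    by_cases hk : (k : ℕ) ≤ m
    · by_cases hl : (l : ℕ) ≤ m
      · have h1 := hC k l hk hl
        have : u k * u l * (1 + 1 / (((k : ℕ) : ℝ) * (((l : ℕ) : ℝ) + 1))) ^ β2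
            ≤ u k * u l * ε ^ (15:ℕ) := mul_le_mul_of_nonneg_left h1 huu0
        have hv1 : 0 ≤ v k * u l := mul_nonneg (hvn k) (hun l)
        have hv2 : 0 ≤ u k * v l := mul_nonneg (hun k) (hvn l)
        nlinarith
      · -- m < l
        have hvl : v l = u l := by
          rw [hvdef, hudef]; dsimp only; rw [if_pos (Nat.lt_of_not_le hl)]
        have h1 := hfactor k l
        have : u k * u l * (1 + 1 / (((k : ℕ) : ℝ) * (((l : ℕ) : ℝ) + 1))) ^ β2
            ≤ u k * u l * 1 := mul_le_mul_of_nonneg_left h1 huu0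
        have hv1 : 0 ≤ v k * u l := mul_nonneg (hvn k) (hun l)
        have he : 0 ≤ ε ^ (15:ℕ) * (u k * u l) := by positivity
        rw [hvl]
        nlinarith [this, hv1, he, huu0]
    · -- m < k
      have hvk : v k = u k := by
        rw [hvdef, hudef]; dsimp only; rw [if_pos (Nat.lt_of_not_le hk)]
      have h1 := hfactor k l
      have : u k * u l * (1 + 1 / (((k : ℕ) : ℝ) * (((l : ℕ) : ℝ) + 1))) ^ β2
          ≤ u k * u l * 1 := mul_le_mul_of_nonneg_left h1 huu0
      have hv2 : 0 ≤ u k * v l := mul_nonneg (hun k) (hvn l)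
      have he : 0 ≤ ε ^ (15:ℕ) * (u k * u l) := by positivity
      rw [hvk]
      nlinarith [this, hv2, he, huu0]
  -- summability of LHS
  have hf_nonneg : ∀ p : ℕ+ × ℕ+,
      0 ≤ (((p.1 : ℕ) : ℝ) * ((p.2 : ℕ) : ℝ)) ^ (-(1 + ε)) *
          (1 + 1 / (((p.1 : ℕ) : ℝ) * (((p.2 : ℕ) : ℝ) + 1))) ^ β2 := by
    rintro ⟨k, l⟩
    dsimp only
    apply mul_nonneg (Real.rpow_nonneg (by positivity) _)
    apply Real.rpow_nonneg
    have hk1 : (1:ℝ) ≤ ((k : ℕ) : ℝ) := by exact_mod_cast k.one_le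
    have hl1 : (1:ℝ) ≤ ((l : ℕ) : ℝ) := by exact_mod_cast l.one_le
    have : (0:ℝ) ≤ 1 / (((k : ℕ) : ℝ) * (((l : ℕ) : ℝ) + 1)) := by positivity
    linarith
  have hRHS : Summable (fun p : ℕ+ × ℕ+ =>
      ε ^ (15:ℕ) * (u p.1 * u p.2) + v p.1 * u p.2 + u p.1 * v p.2) :=
    ((huu.mul_left _).add hvuP).add huvP
  have hf : Summable (fun p : ℕ+ × ℕ+ =>
      (((p.1 : ℕ) : ℝ) * ((p.2 : ℕ) : ℝ)) ^ (-(1 + ε)) *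
        (1 + 1 / (((p.1 : ℕ) : ℝ) * (((p.2 : ℕ) : ℝ) + 1))) ^ β2) := by
    apply Summable.of_nonneg_of_le hf_nonneg hdom hRHS
  -- compute RHS tsum
  have ht1 : (∑' p : ℕ+ × ℕ+, ε ^ (15:ℕ) * (u p.1 * u p.2)) = ε ^ (15:ℕ) * (Z * Z) := by
    rw [tsum_mul_left]
    congr 1
    exact (Summable.tsum_mul_tsum hu hu huu).symm
  have ht2 : (∑' p : ℕ+ × ℕ+, v p.1 * u p.2) = T * Z := (Summable.tsum_mul_tsum hv hu hvuP).symm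
  have ht3 : (∑' p : ℕ+ × ℕ+, u p.1 * v p.2) = Z * T := (Summable.tsum_mul_tsum hu hv huvP).symm
  have hmain : (∑' p : ℕ+ × ℕ+,
      (((p.1 : ℕ) : ℝ) * ((p.2 : ℕ) : ℝ)) ^ (-(1 + ε)) *
        (1 + 1 / (((p.1 : ℕ) : ℝ) * (((p.2 : ℕ) : ℝ) + 1))) ^ β2)
      ≤ ε ^ (15:ℕ) * (Z * Z) + T * Z + Z * T := by
    have h := Summable.tsum_le_tsum hdom hf hRHS
    rw [Summable.tsum_add ((huu.mul_left _).add hvuP) huvP,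
        Summable.tsum_add (huu.mul_left _) hvuP, ht1, ht2, ht3] at h
    exact h
  have hfin : ε ^ (15:ℕ) * (Z * Z) + T * Z + Z * T < 1 :=
    final_numeric hε0 hε hZ0 hT0 hZle hTle
  exact lt_of_le_of_lt hmain hfin
end
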